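/- Let d ∈ ℕ, σ₀² > 0, θ ∈ ℝ^d, and 0 < ς ≤ 1. Let π be the product of d independent N(0, σ₀²) distributions on ℝ^d. Then π( { u ∈ ℝ^d : |u_i − θ_i| ≤ ς for all i } ) ≥ ( ς √(2/(π σ₀²)) )^d · exp( −d ϑ/(2σ₀²) ), where ϑ = max_{1 ≤ i ≤ d} max( (θ_i − 1)², (θ_i + 1)² ). -/

import Mathlib

open MeasureTheory ProbabilityTheory Real
open scoped ENNReal NNReal

noncomputable section

/-- Lower bound for the product of `d` independent `N(0, σ₀²)` distributions of the
sup-norm cube of radius `ς ≤ 1` around `θ`: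
`π({u : |uᵢ − θᵢ| ≤ ς ∀i}) ≥ (ς √(2/(π σ₀²)))^d exp(−dϑ/(2σ₀²))`,
where `ϑ = maxᵢ max((θᵢ−1)², (θᵢ+1)²)`. -/
theorem gaussian_product_cube_lower_bound (d : ℕ) (v : ℝ≥0) (hv : 0 < v)
    (θ : Fin d → ℝ) (ς : ℝ) (hς0 : 0 < ς) (hς1 : ς ≤ 1) :
    ENNReal.ofReal ((ς * Real.sqrt (2 / (Real.pi * (v : ℝ)))) ^ d *
        Real.exp (-((d : ℝ) * ⨆ i, max ((θ i - 1) ^ 2) ((θ i + 1) ^ 2)) / (2 * (v : ℝ))))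
      ≤ (Measure.pi fun _ : Fin d => gaussianReal 0 v) {u | ∀ i, |u i - θ i| ≤ ς} := by
  have hv0 : (0 : ℝ) < v := hv
  have hvne : v ≠ 0 := hv.ne'
  set ϑ : ℝ := ⨆ i, max ((θ i - 1) ^ 2) ((θ i + 1) ^ 2) with hϑdef
  have hϑ_le : ∀ i, max ((θ i - 1) ^ 2) ((θ i + 1) ^ 2) ≤ ϑ := fun i =>
    le_ciSup (f := fun i => max ((θ i - 1) ^ 2) ((θ i + 1) ^ 2))
      (Set.Finite.bddAbove (Set.finite_range _)) i
  have hϑ0 : 0 ≤ ϑ :=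
    Real.iSup_nonneg fun i => le_trans (sq_nonneg _) (le_max_left _ _)
  set a : ℝ := ς * Real.sqrt (2 / (Real.pi * (v : ℝ))) with hadef
  set e : ℝ := Real.exp (-ϑ / (2 * (v : ℝ))) with hedef
  have ha0 : 0 ≤ a := mul_nonneg hς0.le (Real.sqrt_nonneg _)
  have hae0 : 0 ≤ a * e := mul_nonneg ha0 (Real.exp_pos _).le
  have hset : {u : Fin d → ℝ | ∀ i, |u i - θ i| ≤ ς}
      = Set.pi Set.univ (fun i => Set.Icc (θ i - ς) (θ i + ς)) := by
    ext u
    simp only [Set.mem_setOf_eq, Set.mem_pi, Set.mem_univ, true_imp_iff, Set.mem_Icc,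
      abs_sub_le_iff]
    refine forall_congr' fun i => ?_
    constructor
    · rintro ⟨h1, h2⟩; exact ⟨by linarith, by linarith⟩
    · rintro ⟨h1, h2⟩; exact ⟨by linarith, by linarith⟩
  rw [hset, Measure.pi_pi]
  -- per coordinate bound
  have key : ∀ i, ENNReal.ofReal (a * e)
      ≤ gaussianReal 0 v (Set.Icc (θ i - ς) (θ i + ς)) := by
    intro i
    rw [gaussianReal_apply_eq_integral 0 hvne]
    refine ENNReal.ofReal_le_ofReal ?_
    have hconst : ∫ _x in Set.Icc (θ i - ς) (θ i + ς),
        ((Real.sqrt (2 * Real.pi * (v : ℝ)))⁻¹ * e) = a * e := by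
      rw [setIntegral_const, measureReal_def, Real.volume_Icc, smul_eq_mul]
      have h2ς : θ i + ς - (θ i - ς) = 2 * ς := by ring
      rw [h2ς, ENNReal.toReal_ofReal (by linarith)]
      have hsq : Real.sqrt (2 / (Real.pi * (v : ℝ)))
          = 2 / Real.sqrt (2 * Real.pi * (v : ℝ)) := by
        rw [show (2 : ℝ) / (Real.pi * (v : ℝ)) = 4 / (2 * Real.pi * (v : ℝ)) by ring,
          Real.sqrt_div (by norm_num : (0:ℝ) ≤ 4),
          show Real.sqrt 4 = 2 by
            rw [show (4 : ℝ) = 2 ^ 2 by norm_num, Real.sqrt_sq (by norm_num : (0:ℝ) ≤ 2)]]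
      have hs : Real.sqrt (2 * Real.pi * (v : ℝ)) ≠ 0 := by positivity
      rw [hadef, hsq, div_eq_mul_inv]
      ring
    rw [← hconst]
    refine setIntegral_mono_on ?_ ?_ measurableSet_Icc ?_
    · exact integrableOn_const (by rw [Real.volume_Icc]; exact ENNReal.ofReal_ne_top)
    · exact (integrable_gaussianPDFReal 0 v).integrableOn
    · intro x hx
      rw [Set.mem_Icc] at hx
      have hx1 : θ i - 1 ≤ x := by linarith [hx.1]
      have hx2 : x ≤ θ i + 1 := by linarith [hx.2]
      have hxsq : x ^ 2 ≤ ϑ := by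
        refine le_trans ?_ (hϑ_le i)
        rcases le_total x 0 with h | h
        · exact le_max_of_le_left (by nlinarith)
        · exact le_max_of_le_right (by nlinarith)
      rw [gaussianPDFReal, sub_zero]
      have he : e ≤ Real.exp (-x ^ 2 / (2 * (v : ℝ))) := by
        rw [hedef]
        exact Real.exp_le_exp.mpr ((div_le_div_iff_of_pos_right (by positivity)).mpr (by linarith))
      exact mul_le_mul_of_nonneg_left he (by positivity)
  -- assemble
  have hexp : a ^ d * Real.exp (-((d : ℝ) * ϑ) / (2 * (v : ℝ))) = (a * e) ^ d := by
    rw [show -((d : ℝ) * ϑ) / (2 * (v : ℝ)) = (d : ℝ) * (-ϑ / (2 * (v : ℝ))) by ring,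
      Real.exp_nat_mul, hedef]
    ring
  calc ENNReal.ofReal (a ^ d * Real.exp (-((d : ℝ) * ϑ) / (2 * (v : ℝ))))
      = ENNReal.ofReal (a * e) ^ d := by rw [hexp, ENNReal.ofReal_pow hae0]
    _ = ∏ _i : Fin d, ENNReal.ofReal (a * e) := by
        rw [Finset.prod_const, Finset.card_univ, Fintype.card_fin]
    _ ≤ ∏ i, gaussianReal 0 v (Set.Icc (θ i - ς) (θ i + ς)) :=
        Finset.prod_le_prod' fun i _ => key i

end
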